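/- arXiv:1911.06736 — 6 statements merged into one kernel-verified Lean document; each statement's English description precedes it below -/
import Mathlib

section
/- Let T₀ = X and T_{i+1} = (T_i ⊖ AⁱEW) ⊕ Aⁱ(−BU). Define S_i = X ⊕ [⊕_{j=0}^{i-2} Aʲ(−BU)] ⊖ [⊕_{j=0}^{i-1} AʲEW]. If S_{i⋆} = ∅ for some i⋆ > 0, then T_i = ∅ for all i ≥ i⋆. -/
open Matrix

/-- Minkowski sum. -/
def msum {n : ℕ} (A B : Set (Fin n → ℝ)) : Set (Fin n → ℝ) :=
  {w | ∃ a ∈ A, ∃ b ∈ B, w = a + b}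

/-- Minkowski difference. -/
def mdiff {n : ℕ} (A B : Set (Fin n → ℝ)) : Set (Fin n → ℝ) :=
  {x | ∀ b ∈ B, b + x ∈ A}

/-- Iterated Minkowski sum ⊕_{j=0}^{k-1} f j, with the empty sum equal to {0}. -/
def bigMsum {n : ℕ} : ℕ → (ℕ → Set (Fin n → ℝ)) → Set (Fin n → ℝ)
  | 0, _ => {0}
  | k + 1, f => msum (bigMsum k f) (f k)

lemma msum_mono_left {n : ℕ} {A A' B : Set (Fin n → ℝ)} (h : A ⊆ A') :
    msum A B ⊆ msum A' B := by
  rintro x ⟨a, ha, b, hb, rfl⟩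
  exact ⟨a, h ha, b, hb, rfl⟩

lemma mdiff_mono_left {n : ℕ} {A A' B : Set (Fin n → ℝ)} (h : A ⊆ A') :
    mdiff A B ⊆ mdiff A' B := fun _ hx b hb => h (hx b hb)

lemma msum_mdiff_sub {n : ℕ} (P Q R : Set (Fin n → ℝ)) :
    msum (mdiff P Q) R ⊆ mdiff (msum P R) Q := by
  rintro x ⟨a, ha, r, hr, rfl⟩ q hq
  exact ⟨q + a, ha q hq, r, hr, (add_assoc q a r).symm⟩

lemma mdiff_mdiff_sub {n : ℕ} (P Q R : Set (Fin n → ℝ)) :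
    mdiff (mdiff P Q) R ⊆ mdiff P (msum Q R) := by
  rintro x hx s ⟨q, hq, r, hr, rfl⟩
  have := hx r hr q hq
  rwa [add_assoc]

lemma msum_assoc {n : ℕ} (P Q R : Set (Fin n → ℝ)) :
    msum (msum P Q) R = msum P (msum Q R) := by
  ext x
  constructor
  · rintro ⟨-, ⟨a, ha, b, hb, rfl⟩, c, hc, rfl⟩
    exact ⟨a, ha, b + c, ⟨b, hb, c, hc, rfl⟩, (add_assoc a b c)⟩
  · rintro ⟨a, ha, -, ⟨b, hb, c, hc, rfl⟩, rfl⟩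
    exact ⟨a + b, ⟨a, ha, b, hb, rfl⟩, c, hc, (add_assoc a b c).symm⟩

lemma msum_zero_right {n : ℕ} (P : Set (Fin n → ℝ)) : msum P {0} = P := by
  ext x
  constructor
  · rintro ⟨a, ha, b, hb, rfl⟩
    simp only [Set.mem_singleton_iff] at hb
    simpa [hb] using ha
  · intro hx; exact ⟨x, hx, 0, rfl, (add_zero x).symm⟩

lemma msum_zero_left {n : ℕ} (P : Set (Fin n → ℝ)) : msum {0} P = P := by
  ext x
  constructor
  · rintro ⟨a, ha, b, hb, rfl⟩
    simp only [Set.mem_singleton_iff] at ha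
    simpa [ha] using hb
  · intro hx; exact ⟨0, rfl, x, hx, (zero_add x).symm⟩

lemma msum_empty_left {n : ℕ} (P : Set (Fin n → ℝ)) : msum ∅ P = ∅ := by
  ext x; simp [msum]

lemma mdiff_empty {n : ℕ} {P : Set (Fin n → ℝ)} (h : P.Nonempty) : mdiff ∅ P = ∅ := by
  obtain ⟨b, hb⟩ := h
  ext x
  simp only [Set.mem_empty_iff_false, iff_false]
  intro hx
  exact hx b hb

/-- With T₀ = X, T_{i+1} = (T_i ⊖ AⁱEW) ⊕ Aⁱ(−BU), and
    S_i = X ⊕ [⊕_{j=0}^{i-2} Aʲ(−BU)] ⊖ [⊕_{j=0}^{i-1} AʲEW]: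
    if S_{i⋆} = ∅ for some i⋆ > 0, then T_i = ∅ for all i ≥ i⋆. -/
theorem T_empty_of_S_empty {n m p : ℕ}
    (A : Matrix (Fin n) (Fin n) ℝ) (B : Matrix (Fin n) (Fin m) ℝ)
    (E : Matrix (Fin n) (Fin p) ℝ)
    (X : Set (Fin n → ℝ)) (U : Set (Fin m → ℝ)) (W : Set (Fin p → ℝ))
    (hXc : IsCompact X) (hXcv : Convex ℝ X) (hX0 : 0 ∈ interior X)
    (hUc : IsCompact U) (hUcv : Convex ℝ U) (hU0 : 0 ∈ interior U)
    (hWc : IsCompact W) (hWcv : Convex ℝ W) (hW0 : 0 ∈ interior W)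
    (T : ℕ → Set (Fin n → ℝ))
    (hT0 : T 0 = X)
    (hTs : ∀ i, T (i + 1)
      = msum (mdiff (T i) ((A ^ i).mulVec '' (E.mulVec '' W)))
          ((A ^ i).mulVec '' ((fun u => -u) '' (B.mulVec '' U))))
    (S : ℕ → Set (Fin n → ℝ))
    (hS : ∀ i, S i =
      mdiff
        (msum X (bigMsum (i - 1) (fun j => (A ^ j).mulVec '' ((fun u => -u) '' (B.mulVec '' U)))))
        (bigMsum i (fun j => (A ^ j).mulVec '' (E.mulVec '' W))))
    (istar : ℕ) (histar : 0 < istar) (hempty : S istar = ∅) :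
    ∀ i ≥ istar, T i = ∅ := by
  set V : ℕ → Set (Fin n → ℝ) :=
    fun j => (A ^ j).mulVec '' ((fun u => -u) '' (B.mulVec '' U)) with hV
  set Wk : ℕ → Set (Fin n → ℝ) :=
    fun j => (A ^ j).mulVec '' (E.mulVec '' W) with hWk
  -- Key claim: for i ≥ 1, T i ⊆ S i ⊕ V (i-1)
  have key : ∀ i, 1 ≤ i → T i ⊆ msum (S i) (V (i - 1)) := by
    intro i hi
    induction i, hi using Nat.le_induction with
    | base =>
      rw [hTs 0, hT0, hS 1]
      show msum (mdiff X (Wk 0)) (V 0) ⊆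
        msum (mdiff (msum X (bigMsum 0 V)) (bigMsum 1 Wk)) (V 0)
      have h1 : bigMsum 0 V = ({0} : Set (Fin n → ℝ)) := rfl
      have h2 : bigMsum 1 Wk = msum (bigMsum 0 Wk) (Wk 0) := rfl
      rw [h1, h2]
      show msum (mdiff X (Wk 0)) (V 0) ⊆
        msum (mdiff (msum X {0}) (msum {0} (Wk 0))) (V 0)
      rw [msum_zero_right, msum_zero_left]
    | succ i hi ih =>
      rw [hTs i]
      have step1 : mdiff (T i) (Wk i) ⊆
          mdiff (msum (S i) (V (i - 1))) (Wk i) := mdiff_mono_left ih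
      have step2 : msum (S i) (V (i - 1)) ⊆
          mdiff (msum (msum X (bigMsum (i - 1) V)) (V (i - 1))) (bigMsum i Wk) := by
        rw [hS i]
        exact msum_mdiff_sub _ _ _
      have step3 : mdiff (T i) (Wk i) ⊆
          mdiff (msum (msum X (bigMsum (i - 1) V)) (V (i - 1))) (msum (bigMsum i Wk) (Wk i)) :=
        step1.trans ((mdiff_mono_left step2).trans (mdiff_mdiff_sub _ _ _))
      have hP : msum (msum X (bigMsum (i - 1) V)) (V (i - 1)) = msum X (bigMsum i V) := by
        rw [msum_assoc]
        congr 1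
        have : bigMsum (i - 1 + 1) V = msum (bigMsum (i - 1) V) (V (i - 1)) := rfl
        rw [← this, Nat.sub_add_cancel hi]
      have hQ : msum (bigMsum i Wk) (Wk i) = bigMsum (i + 1) Wk := rfl
      rw [hP, hQ] at step3
      have hSi1 : S (i + 1) = mdiff (msum X (bigMsum i V)) (bigMsum (i + 1) Wk) := by
        rw [hS (i + 1)]
        norm_num
      rw [← hSi1] at step3
      have : i + 1 - 1 = i := rfl
      rw [this]
      exact msum_mono_left step3
  -- T istar = ∅
  have hTistar : T istar = ∅ := by
    have := key istar histar
    rw [hempty, msum_empty_left] at this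
    exact Set.eq_empty_iff_forall_notMem.mpr fun x hx => this hx
  -- propagate emptiness
  intro i hi
  induction i, hi using Nat.le_induction with
  | base => exact hTistar
  | succ i _ ih =>
    rw [hTs i, ih]
    have hWne : (Wk i).Nonempty := by
      refine ⟨(A ^ i).mulVec (E.mulVec 0), ?_⟩
      exact ⟨E.mulVec 0, ⟨0, interior_subset hW0, rfl⟩, rfl⟩
    rw [mdiff_empty hWne, msum_empty_left]
end

section
/- Define C₀ = X and C_{i+1} = {x ∈ X : ∃ u ∈ U, ∀ w ∈ W, Ax + Bu + Ew ∈ C_i}. Define T₀ = X, T_{i+1} = (T_i ⊖ AⁱEW) ⊕ Aⁱ(−BU). Then for every i ∈ ℕ, C_i ⊆ ⋂_{j=0}^{i} (Aʲ)⁻¹ T_j, where (Aʲ)⁻¹ denotes preimage under Aʲ. -/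
open Matrix

/-- With C₀ = X, C_{i+1} = {x ∈ X : ∃ u ∈ U, ∀ w ∈ W, Ax + Bu + Ew ∈ C_i} and
    T₀ = X, T_{i+1} = (T_i ⊖ AⁱEW) ⊕ Aⁱ(−BU):
    for every i, C_i ⊆ ⋂_{j=0}^{i} (Aʲ)⁻¹ T_j. -/
theorem C_subset_inter_preimage_T {n m p : ℕ}
    (A : Matrix (Fin n) (Fin n) ℝ) (B : Matrix (Fin n) (Fin m) ℝ)
    (E : Matrix (Fin n) (Fin p) ℝ)
    (X : Set (Fin n → ℝ)) (U : Set (Fin m → ℝ)) (W : Set (Fin p → ℝ))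
    (hXc : IsCompact X) (hXcv : Convex ℝ X) (hX0 : 0 ∈ interior X)
    (hUc : IsCompact U) (hUcv : Convex ℝ U) (hU0 : 0 ∈ interior U)
    (hWc : IsCompact W) (hWcv : Convex ℝ W) (hW0 : (0 : Fin p → ℝ) ∈ W)
    (C : ℕ → Set (Fin n → ℝ))
    (hC0 : C 0 = X)
    (hCs : ∀ i, C (i + 1)
      = {x ∈ X | ∃ u ∈ U, ∀ w ∈ W, A *ᵥ x + B *ᵥ u + E *ᵥ w ∈ C i})
    (T : ℕ → Set (Fin n → ℝ))
    (hT0 : T 0 = X)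
    (hTs : ∀ i, T (i + 1)
      = msum (mdiff (T i) ((A ^ i).mulVec '' (E.mulVec '' W)))
          ((A ^ i).mulVec '' ((fun u => -u) '' (B.mulVec '' U)))) :
    ∀ i, C i ⊆ ⋂ j ∈ Set.Iic i, (A ^ j).mulVec ⁻¹' (T j) := by
  intro i
  induction i with
  | zero =>
    intro x hx
    simp only [Set.mem_iInter, Set.mem_Iic, Set.mem_preimage]
    intro j hj
    interval_cases j
    rw [hC0] at hx
    simpa [hT0, pow_zero, Matrix.one_mulVec] using hx
  | succ i ih =>
    intro x hx
    rw [hCs] at hx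
    obtain ⟨hxX, u, hu, hw⟩ := hx
    simp only [Set.mem_iInter, Set.mem_Iic, Set.mem_preimage]
    intro j hj
    match j, hj with
    | 0, _ => simpa [hT0, pow_zero, Matrix.one_mulVec] using hxX
    | k+1, hj =>
      have hk : k ≤ i := Nat.succ_le_succ_iff.mp hj
      rw [hTs]
      refine ⟨(A^(k+1)).mulVec x + (A^k).mulVec (B.mulVec u), ?_,
        -((A^k).mulVec (B.mulVec u)), ?_, by abel⟩
      · intro b hb
        obtain ⟨-, ⟨w, hwW, rfl⟩, rfl⟩ := hb
        have h2 := ih (hw w hwW)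
        simp only [Set.mem_iInter, Set.mem_Iic, Set.mem_preimage] at h2
        have h3 := h2 k hk
        have heq : (A^k).mulVec ((A *ᵥ x + B *ᵥ u + E *ᵥ w))
            = (A^k).mulVec (E *ᵥ w) + ((A^(k+1)).mulVec x + (A^k).mulVec (B *ᵥ u)) := by
          simp only [Matrix.mulVec_add, Matrix.mulVec_mulVec, pow_succ]
          abel
        rw [← heq]
        exact h3
      · exact ⟨-(B.mulVec u), ⟨B.mulVec u, ⟨u, hu, rfl⟩, rfl⟩, by simp [Matrix.mulVec_neg]⟩
end

section
/- With C_i and T_i defined as in the backwards-reachability recursions (C₀ = X, C_{i+1} = {x ∈ X : ∃ u ∈ U, ∀ w ∈ W, Ax+Bu+Ew ∈ C_i}; T₀ = X, T_{i+1} = (T_i ⊖ AⁱEW) ⊕ Aⁱ(−BU)): if T_{i⋆} = ∅ for some i⋆ > 0, then C_i = ∅ for all i ≥ i⋆. -/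
open Matrix

/-- With the backwards-reachability recursions for C and T:
    if T_{i⋆} = ∅ for some i⋆ > 0, then C_i = ∅ for all i ≥ i⋆. -/
theorem C_empty_of_T_empty {n m p : ℕ}
    (A : Matrix (Fin n) (Fin n) ℝ) (B : Matrix (Fin n) (Fin m) ℝ)
    (E : Matrix (Fin n) (Fin p) ℝ)
    (X : Set (Fin n → ℝ)) (U : Set (Fin m → ℝ)) (W : Set (Fin p → ℝ))
    (hXne : X.Nonempty) (hXc : IsCompact X) (hXcv : Convex ℝ X)
    (hUne : U.Nonempty) (hUc : IsCompact U) (hUcv : Convex ℝ U)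
    (hWne : W.Nonempty) (hWc : IsCompact W) (hWcv : Convex ℝ W)
    (C : ℕ → Set (Fin n → ℝ))
    (hC0 : C 0 = X)
    (hCs : ∀ i, C (i + 1)
      = {x ∈ X | ∃ u ∈ U, ∀ w ∈ W, A *ᵥ x + B *ᵥ u + E *ᵥ w ∈ C i})
    (T : ℕ → Set (Fin n → ℝ))
    (hT0 : T 0 = X)
    (hTs : ∀ i, T (i + 1)
      = msum (mdiff (T i) ((A ^ i).mulVec '' (E.mulVec '' W)))
          ((A ^ i).mulVec '' ((fun u => -u) '' (B.mulVec '' U))))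
    (istar : ℕ) (histar : 0 < istar) (hempty : T istar = ∅) :
    ∀ i ≥ istar, C i = ∅ := by
  have key : ∀ i, ∀ x ∈ C i, ∀ j ≤ i, (A ^ j) *ᵥ x ∈ T j := by
    intro i
    induction i with
    | zero =>
      intro x hx j hj
      interval_cases j
      simpa [hT0, hC0, Matrix.one_mulVec] using hx
    | succ i ih =>
      intro x hx j hj
      rw [hCs] at hx
      obtain ⟨hxX, u, hu, hw⟩ := hx
      match j with
      | 0 => simpa [hT0, Matrix.one_mulVec] using hxX
      | k + 1 =>
        have hk : k ≤ i := Nat.succ_le_succ_iff.mp hj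
        rw [hTs]
        refine ⟨(A ^ k) *ᵥ (A *ᵥ x) + (A ^ k) *ᵥ (B *ᵥ u), ?_,
          (A ^ k) *ᵥ (-(B *ᵥ u)), ?_, ?_⟩
        · intro b hb
          obtain ⟨w', ⟨w, hwW, rfl⟩, rfl⟩ := hb
          have h := ih _ (hw w hwW) k hk
          simpa [Matrix.mulVec_add, add_comm, add_left_comm, add_assoc] using h
        · exact ⟨-(B *ᵥ u), ⟨B *ᵥ u, ⟨u, hu, rfl⟩, rfl⟩, rfl⟩
        · rw [pow_succ, ← Matrix.mulVec_mulVec, Matrix.mulVec_neg]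
          abel
  intro i hi
  ext x
  simp only [Set.mem_empty_iff_false, iff_false]
  intro hx
  have h := key i x hx istar hi
  rw [hempty] at h
  exact h
end

section
/- If U = {0} (no control), B arbitrary, then the recursion T₀ = X, T_{i+1} = T_i ⊖ AⁱEW yields T_i = X ⊖ R_i with R_i := ⊕_{j=0}^{i-1} AʲEW, and moreover the i-step robust admissible set satisfies C_i = ⋂_{j=0}^{i} (Aʲ)⁻¹(X ⊖ R_j) exactly (with equality). -/
open Matrix

/-- Autonomous case (U = {0}): with T₀ = X, T_{i+1} = T_i ⊖ AⁱEW, and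
    R_i = ⊕_{j=0}^{i-1} AʲEW, we have T_i = X ⊖ R_i, and the i-step robust
    admissible sets satisfy C_i = ⋂_{j=0}^{i} (Aʲ)⁻¹(X ⊖ R_j) with equality. -/
theorem autonomous_T_and_C {n p : ℕ}
    (A : Matrix (Fin n) (Fin n) ℝ) (E : Matrix (Fin n) (Fin p) ℝ)
    (X : Set (Fin n → ℝ)) (W : Set (Fin p → ℝ))
    (hXc : IsCompact X) (hXcv : Convex ℝ X) (hX0 : (0 : Fin n → ℝ) ∈ X)
    (hWc : IsCompact W) (hWcv : Convex ℝ W) (hW0 : (0 : Fin p → ℝ) ∈ W)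
    (T : ℕ → Set (Fin n → ℝ))
    (hT0 : T 0 = X)
    (hTs : ∀ i, T (i + 1) = mdiff (T i) ((A ^ i).mulVec '' (E.mulVec '' W)))
    (C : ℕ → Set (Fin n → ℝ))
    (hC0 : C 0 = X)
    (hCs : ∀ i, C (i + 1) = {x ∈ X | ∀ w ∈ W, A *ᵥ x + E *ᵥ w ∈ C i})
    (R : ℕ → Set (Fin n → ℝ))
    (hR : ∀ i, R i = bigMsum i (fun j => (A ^ j).mulVec '' (E.mulVec '' W))) :
    (∀ i, T i = mdiff X (R i)) ∧
    (∀ i, C i = ⋂ j ∈ Set.Iic i, (A ^ j).mulVec ⁻¹' (mdiff X (R j))) := by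
  have hR0 : R 0 = {0} := by rw [hR]; rfl
  have hRs : ∀ j, R (j + 1) = msum (R j) ((A ^ j).mulVec '' (E.mulVec '' W)) := by
    intro j; rw [hR, hR]; rfl
  have hT : ∀ i, T i = mdiff X (R i) := by
    intro i
    induction i with
    | zero =>
      rw [hT0, hR0]; ext x; simp [mdiff]
    | succ i ih =>
      rw [hTs, ih, hRs]
      ext x
      constructor
      · rintro h b ⟨r, hr, d, hd, rfl⟩
        have := h d hd r hr
        simpa [add_assoc] using this
      · rintro h d hd r hr
        have := h (r + d) ⟨r, hr, d, hd, rfl⟩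
        simpa [add_assoc] using this
  have key : ∀ i x, x ∈ C i ↔ ∀ j ≤ i, ∀ r ∈ R j, r + (A ^ j) *ᵥ x ∈ X := by
    intro i
    induction i with
    | zero =>
      intro x
      rw [hC0]
      constructor
      · intro hx j hj r hr
        interval_cases j
        rw [hR0] at hr
        simp only [Set.mem_singleton_iff] at hr
        subst hr
        simpa using hx
      · intro h
        have := h 0 le_rfl 0 (by rw [hR0]; rfl)
        simpa using this
    | succ i ih =>
      intro x
      rw [hCs]
      constructor
      · rintro ⟨hx, h⟩ j hj r hr
        match j with
        | 0 =>
          rw [hR0] at hr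
          simp only [Set.mem_singleton_iff] at hr
          subst hr
          simpa using hx
        | j + 1 =>
          rw [hRs] at hr
          obtain ⟨r', hr', d, ⟨w', ⟨w, hw, rfl⟩, rfl⟩, rfl⟩ := hr
          have h2 := (ih (A *ᵥ x + E *ᵥ w)).mp (h w hw) j (by omega) r' hr'
          have heq : (A ^ j) *ᵥ (A *ᵥ x + E *ᵥ w)
              = (A ^ (j + 1)) *ᵥ x + (A ^ j) *ᵥ (E *ᵥ w) := by
            rw [Matrix.mulVec_add, Matrix.mulVec_mulVec, ← pow_succ]
          rw [heq] at h2
          have : r' + (A ^ j) *ᵥ (E *ᵥ w) + (A ^ (j + 1)) *ᵥ x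
              = r' + ((A ^ (j + 1)) *ᵥ x + (A ^ j) *ᵥ (E *ᵥ w)) := by abel
          rw [this]
          exact h2
      · intro h
        have hx : x ∈ X := by
          have := h 0 (by omega) 0 (by rw [hR0]; rfl)
          simpa using this
        refine ⟨hx, fun w hw => (ih _).mpr fun j hj r hr => ?_⟩
        have hmem : r + (A ^ j) *ᵥ (E *ᵥ w) ∈ R (j + 1) := by
          rw [hRs]
          exact ⟨r, hr, (A ^ j) *ᵥ (E *ᵥ w), ⟨E *ᵥ w, ⟨w, hw, rfl⟩, rfl⟩, rfl⟩
        have h2 := h (j + 1) (by omega) _ hmem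
        have heq : (A ^ j) *ᵥ (A *ᵥ x + E *ᵥ w)
            = (A ^ (j + 1)) *ᵥ x + (A ^ j) *ᵥ (E *ᵥ w) := by
          rw [Matrix.mulVec_add, Matrix.mulVec_mulVec, ← pow_succ]
        rw [heq]
        have : r + ((A ^ (j + 1)) *ᵥ x + (A ^ j) *ᵥ (E *ᵥ w))
            = r + (A ^ j) *ᵥ (E *ᵥ w) + (A ^ (j + 1)) *ᵥ x := by abel
        rw [this]
        exact h2
  refine ⟨hT, fun i => ?_⟩
  ext x
  simp only [Set.mem_iInter, Set.mem_Iic, Set.mem_preimage, mdiff, Set.mem_setOf_eq]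
  exact key i x
end

section
/- If ρ ≥ 1 and α > 1/(1+ρ), then for all sufficiently large i, α(ρ^{i−1}) − (1−2α)·(sum_{j=0}^{i-2} ρʲ) exceeds any fixed constant H ≥ 0; consequently (under the setting of the main theorem with dominant real eigenvalue ρ ≥ 1 of Aᵀ with eigenvector v, h_{BU}(v) > 0) there exists i⋆ with S_{i⋆}^α = ∅. -/
open Matrix Pointwise

/-- Support function. -/
noncomputable def supp {n : ℕ} (z : Fin n → ℝ) (S : Set (Fin n → ℝ)) : ℝ :=
  sSup ((fun s => z ⬝ᵥ s) '' S)

/- ----------------- auxiliary lemmas ----------------- -/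

lemma continuous_dotAux {n : ℕ} (v : Fin n → ℝ) : Continuous (fun s : Fin n → ℝ => v ⬝ᵥ s) := by
  simp only [dotProduct]
  exact continuous_finset_sum _ fun j _ => continuous_const.mul (continuous_apply j)

lemma continuous_mulVecAux {k l : ℕ} (M : Matrix (Fin k) (Fin l) ℝ) : Continuous M.mulVec := by
  refine continuous_pi fun i => ?_
  simp only [Matrix.mulVec, dotProduct]
  exact continuous_finset_sum _ fun j _ => continuous_const.mul (continuous_apply j)

lemma isCompact_msum {n : ℕ} {P Q : Set (Fin n → ℝ)} (hP : IsCompact P) (hQ : IsCompact Q) :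
    IsCompact (msum P Q) := by
  have h : msum P Q = (fun p : (Fin n → ℝ) × (Fin n → ℝ) => p.1 + p.2) '' (P ×ˢ Q) := by
    ext w
    constructor
    · rintro ⟨a, ha, b, hb, rfl⟩
      exact ⟨(a, b), ⟨ha, hb⟩, rfl⟩
    · rintro ⟨⟨a, b⟩, ⟨ha, hb⟩, rfl⟩
      exact ⟨a, ha, b, hb, rfl⟩
  rw [h]
  exact (hP.prod hQ).image (continuous_fst.add continuous_snd)

lemma msum_image_dot {n : ℕ} (v : Fin n → ℝ) (P Q : Set (Fin n → ℝ)) :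
    (fun s => v ⬝ᵥ s) '' msum P Q = ((fun s => v ⬝ᵥ s) '' P) + ((fun s => v ⬝ᵥ s) '' Q) := by
  ext y
  constructor
  · rintro ⟨w, ⟨a, ha, b, hb, rfl⟩, rfl⟩
    show v ⬝ᵥ (a + b) ∈ _
    rw [dotProduct_add]
    exact Set.add_mem_add ⟨a, ha, rfl⟩ ⟨b, hb, rfl⟩
  · rintro ⟨p, ⟨a, ha, rfl⟩, q, ⟨b, hb, rfl⟩, rfl⟩
    exact ⟨a + b, ⟨a, ha, b, hb, rfl⟩, dotProduct_add v a b⟩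

lemma supp_msum {n : ℕ} (v : Fin n → ℝ) {P Q : Set (Fin n → ℝ)}
    (hP1 : P.Nonempty) (hP2 : BddAbove ((fun s => v ⬝ᵥ s) '' P))
    (hQ1 : Q.Nonempty) (hQ2 : BddAbove ((fun s => v ⬝ᵥ s) '' Q)) :
    supp v (msum P Q) = supp v P + supp v Q := by
  unfold supp
  rw [msum_image_dot]
  exact csSup_add (hP1.image _) hP2 (hQ1.image _) hQ2

lemma image_dot_smul {n : ℕ} (v : Fin n → ℝ) (c : ℝ) (S : Set (Fin n → ℝ)) :
    (fun s => v ⬝ᵥ s) '' (c • S) = c • ((fun s => v ⬝ᵥ s) '' S) := by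
  ext y
  constructor
  · rintro ⟨w, hw, rfl⟩
    obtain ⟨s, hs, rfl⟩ := hw
    exact ⟨v ⬝ᵥ s, ⟨s, hs, rfl⟩, (dotProduct_smul c v s).symm⟩
  · rintro ⟨r, ⟨s, hs, rfl⟩, rfl⟩
    exact ⟨c • s, ⟨s, hs, rfl⟩, dotProduct_smul c v s⟩

lemma supp_smul_set {n : ℕ} (v : Fin n → ℝ) {c : ℝ} (hc : 0 ≤ c) (S : Set (Fin n → ℝ)) :
    supp v (c • S) = c * supp v S := by
  unfold supp
  rw [image_dot_smul, Real.sSup_smul_of_nonneg hc, smul_eq_mul]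

lemma supp_le_of_shift {n : ℕ} (w x : Fin n → ℝ) {T R : Set (Fin n → ℝ)} (hT : T.Nonempty)
    (hR : BddAbove ((fun s => w ⬝ᵥ s) '' R)) (h : ∀ b ∈ T, b + x ∈ R) :
    supp w T + w ⬝ᵥ x ≤ supp w R := by
  have hle : ∀ y ∈ (fun s => w ⬝ᵥ s) '' T, y ≤ supp w R - w ⬝ᵥ x := by
    rintro y ⟨b, hb, rfl⟩
    have h1 : w ⬝ᵥ (b + x) ≤ supp w R := le_csSup hR ⟨b + x, h b hb, rfl⟩
    rw [dotProduct_add] at h1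
    linarith
  have := csSup_le (hT.image _) hle
  have h2 : supp w T ≤ supp w R - w ⬝ᵥ x := this
  linarith

lemma dot_neg_image {n : ℕ} (v : Fin n → ℝ) {S : Set (Fin n → ℝ)} (hsym : ∀ x ∈ S, -x ∈ S) :
    (fun s => (-v) ⬝ᵥ s) '' S = (fun s => v ⬝ᵥ s) '' S := by
  ext y
  constructor
  · rintro ⟨s, hs, rfl⟩
    exact ⟨-s, hsym s hs, by simp [dotProduct_neg, neg_dotProduct]⟩
  · rintro ⟨s, hs, rfl⟩
    exact ⟨-s, hsym s hs, by simp [dotProduct_neg, neg_dotProduct]⟩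

/-- If ρ ≥ 1 and α > 1/(1+ρ), the scalar quantity α·ρ^{i−1} − (1−2α)·∑_{j=0}^{i-2} ρʲ
    eventually exceeds any fixed constant H ≥ 0; consequently, in the setting of the
    main theorem, there exists i⋆ with S_{i⋆}^α = ∅. -/
theorem eventually_exceeds_and_S_empty {n m : ℕ}
    (A : Matrix (Fin n) (Fin n) ℝ) (B : Matrix (Fin n) (Fin m) ℝ)
    (X : Set (Fin n → ℝ)) (U : Set (Fin m → ℝ))
    (hXc : IsCompact X) (hXcv : Convex ℝ X) (hX0 : 0 ∈ interior X)
    (hUc : IsCompact U) (hUcv : Convex ℝ U) (hU0 : 0 ∈ interior U)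
    (hUsym : U = -U)
    (α : ℝ) (hα0 : 0 < α) (hα1 : α < 1)
    (v : Fin n → ℝ) (hv : v ≠ 0) (ρ : ℝ) (hρ : 1 ≤ ρ)
    (heig : Aᵀ *ᵥ v = ρ • v)
    (hspec : ∀ μ ∈ spectrum ℂ (A.map (Complex.ofReal ·)), ‖μ‖ ≤ ρ)
    (hBU : 0 < supp v (B.mulVec '' U))
    (halpha : α > 1 / (1 + ρ))
    (S : ℕ → Set (Fin n → ℝ))
    (hS : ∀ i, S i =
      mdiff
        (msum X ((1 - α) • bigMsum (i - 1) (fun j => (A ^ j).mulVec '' (B.mulVec '' U))))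
        (α • bigMsum i (fun j => (A ^ j).mulVec '' (B.mulVec '' U)))) :
    (∀ H : ℝ, 0 ≤ H → ∃ N : ℕ, ∀ i ≥ N,
      α * ρ ^ (i - 1) - (1 - 2 * α) * (∑ j ∈ Finset.range (i - 1), ρ ^ j) > H) ∧
    (∃ istar : ℕ, S istar = ∅) := by
  have hρ0 : (0:ℝ) < ρ := lt_of_lt_of_le one_pos hρ
  have h1ρ : (0:ℝ) < 1 + ρ := by linarith
  have hc : 0 < α * (1 + ρ) - 1 := by
    rw [gt_iff_lt, div_lt_iff₀ h1ρ] at halpha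
    linarith
  have key : ∀ k : ℕ, α * ρ ^ k - (1 - 2 * α) * (∑ j ∈ Finset.range k, ρ ^ j)
      = α + (α * (1 + ρ) - 1) * ∑ j ∈ Finset.range k, ρ ^ j := by
    intro k
    have G := geom_sum_mul ρ k
    linear_combination (-α) * G
  have hσ : ∀ k : ℕ, (k : ℝ) ≤ ∑ j ∈ Finset.range k, ρ ^ j := by
    intro k
    calc (k : ℝ) = ∑ _j ∈ Finset.range k, (1:ℝ) := by simp
    _ ≤ _ := Finset.sum_le_sum fun j _ => one_le_pow₀ hρ
  have part1 : ∀ H : ℝ, 0 ≤ H → ∃ N : ℕ, ∀ i ≥ N,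
      α * ρ ^ (i - 1) - (1 - 2 * α) * (∑ j ∈ Finset.range (i - 1), ρ ^ j) > H := by
    intro H hH
    obtain ⟨N0, hN0⟩ := exists_nat_gt (H / (α * (1 + ρ) - 1))
    refine ⟨N0 + 1, fun i hi => ?_⟩
    rw [key]
    have h1 : (N0 : ℝ) ≤ ((i - 1 : ℕ) : ℝ) := by
      have : N0 ≤ i - 1 := by omega
      exact_mod_cast this
    have h2 := hσ (i - 1)
    rw [div_lt_iff₀ hc] at hN0
    nlinarith [mul_le_mul_of_nonneg_left (le_trans h1 h2) hc.le]
  refine ⟨part1, ?_⟩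
  -- Part 2
  set f : ℕ → Set (Fin n → ℝ) := fun j => (A ^ j).mulVec '' (B.mulVec '' U) with hfdef
  have hU0' : (0 : Fin m → ℝ) ∈ U := interior_subset hU0
  have hX0' : (0 : Fin n → ℝ) ∈ X := interior_subset hX0
  have hBUc : IsCompact (B.mulVec '' U) := hUc.image (continuous_mulVecAux B)
  have hfc : ∀ j, IsCompact (f j) := fun j => hBUc.image (continuous_mulVecAux (A ^ j))
  have hBigc : ∀ k, IsCompact (bigMsum k f) := by
    intro k
    induction k with
    | zero => exact isCompact_singleton
    | succ k ih => exact isCompact_msum ih (hfc k)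
  have hf0 : ∀ j, (0 : Fin n → ℝ) ∈ f j := by
    intro j
    exact ⟨0, ⟨0, hU0', Matrix.mulVec_zero B⟩, Matrix.mulVec_zero (A ^ j)⟩
  have hBig0 : ∀ k, (0 : Fin n → ℝ) ∈ bigMsum k f := by
    intro k
    induction k with
    | zero => rfl
    | succ k ih => exact ⟨0, ih, 0, hf0 k, by simp⟩
  have hfsym : ∀ j, ∀ x ∈ f j, -x ∈ f j := by
    rintro j x ⟨w, ⟨u, hu, rfl⟩, rfl⟩
    refine ⟨-(B *ᵥ u), ⟨-u, ?_, by simp [Matrix.mulVec_neg]⟩, by simp [Matrix.mulVec_neg]⟩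
    rw [hUsym]
    simpa using hu
  have hBigsym : ∀ k, ∀ x ∈ bigMsum k f, -x ∈ bigMsum k f := by
    intro k
    induction k with
    | zero => rintro x rfl; simp; rfl
    | succ k ih =>
      rintro x ⟨a, ha, b, hb, rfl⟩
      exact ⟨-a, ih a ha, -b, hfsym k b hb, by abel⟩
  -- dot product with eigenvector
  have hpow : ∀ j : ℕ, (Aᵀ) ^ j *ᵥ v = (ρ ^ j) • v := by
    intro j
    induction j with
    | zero => simp
    | succ k ih =>
      rw [pow_succ, ← Matrix.mulVec_mulVec, heig, Matrix.mulVec_smul, ih, smul_smul, ← pow_succ']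
  have hdotA : ∀ (j : ℕ) (w : Fin n → ℝ), v ⬝ᵥ ((A ^ j) *ᵥ w) = ρ ^ j * (v ⬝ᵥ w) := by
    intro j w
    rw [Matrix.dotProduct_mulVec, ← Matrix.mulVec_transpose, Matrix.transpose_pow, hpow,
      smul_dotProduct, smul_eq_mul]
  have himg : ∀ j, (fun s => v ⬝ᵥ s) '' (f j)
      = (ρ ^ j) • ((fun s => v ⬝ᵥ s) '' (B.mulVec '' U)) := by
    intro j
    ext y
    constructor
    · rintro ⟨s, ⟨w, hw, rfl⟩, rfl⟩
      exact ⟨v ⬝ᵥ w, ⟨w, hw, rfl⟩, by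
        show ρ ^ j • (v ⬝ᵥ w) = v ⬝ᵥ (A ^ j *ᵥ w)
        rw [smul_eq_mul, hdotA j w]⟩
    · rintro ⟨r, ⟨w, hw, rfl⟩, rfl⟩
      exact ⟨(A ^ j) *ᵥ w, ⟨w, hw, rfl⟩, by
        show v ⬝ᵥ (A ^ j *ᵥ w) = ρ ^ j • (v ⬝ᵥ w)
        rw [hdotA j w, smul_eq_mul]⟩
  have hsuppf : ∀ j, supp v (f j) = ρ ^ j * supp v (B.mulVec '' U) := by
    intro j
    unfold supp
    rw [himg j, Real.sSup_smul_of_nonneg (pow_nonneg hρ0.le j), smul_eq_mul]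
  -- boundedness of dot images
  have hbdd : ∀ (w : Fin n → ℝ) (T : Set (Fin n → ℝ)), IsCompact T →
      BddAbove ((fun s => w ⬝ᵥ s) '' T) := fun w T hT =>
    (hT.image (continuous_dotAux w)).bddAbove
  -- support of bigMsum
  have hM : ∀ k, supp v (bigMsum k f)
      = supp v (B.mulVec '' U) * ∑ j ∈ Finset.range k, ρ ^ j := by
    intro k
    induction k with
    | zero =>
      simp only [Finset.range_zero, Finset.sum_empty, mul_zero]
      unfold supp
      rw [show bigMsum 0 f = {0} from rfl, Set.image_singleton, dotProduct_zero, csSup_singleton]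
    | succ k ih =>
      rw [show bigMsum (k + 1) f = msum (bigMsum k f) (f k) from rfl,
        supp_msum v ⟨0, hBig0 k⟩ (hbdd v _ (hBigc k)) ⟨0, hf0 k⟩ (hbdd v _ (hfc k)),
        ih, hsuppf k, Finset.sum_range_succ]
      ring
  have hMneg : ∀ k, supp (-v) (bigMsum k f) = supp v (bigMsum k f) := by
    intro k
    unfold supp
    rw [dot_neg_image v (hBigsym k)]
  have hXneg0 : 0 ≤ supp v X ∧ 0 ≤ supp (-v) X := by
    constructor
    · exact le_csSup (hbdd v X hXc) ⟨0, hX0', by simp⟩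
    · exact le_csSup (hbdd (-v) X hXc) ⟨0, hX0', by simp⟩
  set hval := supp v (B.mulVec '' U) with hhval
  set H := (supp v X + supp (-v) X) / (2 * hval) with hHdef
  have hH : 0 ≤ H := by
    apply div_nonneg (by linarith [hXneg0.1, hXneg0.2]) (by linarith)
  obtain ⟨N, hN⟩ := part1 H hH
  refine ⟨N + 1, ?_⟩
  rw [hS (N + 1)]
  by_contra hne
  obtain ⟨x, hx⟩ := Set.nonempty_iff_ne_empty.mpr hne
  have hx' : ∀ b ∈ α • bigMsum (N + 1) f, b + x ∈
      msum X ((1 - α) • bigMsum N f) := by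
    intro b hb
    have := hx b hb
    simpa using this
  -- compactness of the right-hand side
  have hRc : IsCompact (msum X ((1 - α) • bigMsum N f)) :=
    isCompact_msum hXc (IsCompact.smul (1 - α) (hBigc N))
  have hTne : (α • bigMsum (N + 1) f).Nonempty := ⟨(0 : Fin n → ℝ), ⟨0, hBig0 (N + 1), smul_zero α⟩⟩
  have t1 := supp_le_of_shift v x hTne (hbdd v _ hRc) hx'
  have t2 := supp_le_of_shift (-v) x hTne (hbdd (-v) _ hRc) hx'
  have hα1' : (0:ℝ) ≤ 1 - α := by linarith
  have hXne : X.Nonempty := ⟨0, hX0'⟩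
  have hQne : ((1 - α) • bigMsum N f).Nonempty := ⟨(0 : Fin n → ℝ), ⟨0, hBig0 N, smul_zero _⟩⟩
  have hsuppR : supp v (msum X ((1 - α) • bigMsum N f))
      = supp v X + (1 - α) * (hval * ∑ j ∈ Finset.range N, ρ ^ j) := by
    rw [supp_msum v hXne (hbdd v X hXc) hQne
        (hbdd v _ (IsCompact.smul (1 - α) (hBigc N))),
      supp_smul_set v hα1', hM N]
  have hsuppRneg : supp (-v) (msum X ((1 - α) • bigMsum N f))
      = supp (-v) X + (1 - α) * (hval * ∑ j ∈ Finset.range N, ρ ^ j) := by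
    rw [supp_msum (-v) hXne (hbdd (-v) X hXc) hQne
        (hbdd (-v) _ (IsCompact.smul (1 - α) (hBigc N))),
      supp_smul_set (-v) hα1']
    congr 1
    rw [hMneg N, hM N]
  have hsuppT : supp v (α • bigMsum (N + 1) f)
      = α * (hval * ∑ j ∈ Finset.range (N + 1), ρ ^ j) := by
    rw [supp_smul_set v hα0.le, hM]
  have hsuppTneg : supp (-v) (α • bigMsum (N + 1) f)
      = α * (hval * ∑ j ∈ Finset.range (N + 1), ρ ^ j) := by
    rw [supp_smul_set (-v) hα0.le]
    congr 1
    rw [hMneg, hM]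
  rw [hsuppT, hsuppR] at t1
  rw [hsuppTneg, hsuppRneg, neg_dotProduct] at t2
  have hNineq := hN (N + 1) (by omega)
  simp only [Nat.add_sub_cancel] at hNineq
  rw [hHdef] at hNineq
  rw [gt_iff_lt, div_lt_iff₀ (by linarith : (0:ℝ) < 2 * hval)] at hNineq
  rw [Finset.sum_range_succ] at t1 t2
  nlinarith [t1, t2, hNineq]
end

section
/- Suppose the maximal robust control invariant set C_∞ := ⋂_{i≥0} C_i (with C₀ = X and C_{i+1} = {x ∈ X : ∃ u ∈ U, ∀ w ∈ W, Ax + Bu + Ew ∈ C_i}, where X convex compact, U, W convex compact) has 0 in its interior. Then C_∞ is robust control invariant: for every x ∈ C_∞ there exists u ∈ U such that Ax + Bu + Ew ∈ C_∞ for all w ∈ W. -/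
open Matrix

/-- If C_∞ := ⋂_i C_i (with C₀ = X and
    C_{i+1} = {x ∈ X : ∃ u ∈ U, ∀ w ∈ W, Ax + Bu + Ew ∈ C_i}) has 0 in its
    interior, then C_∞ is robust control invariant: for every x ∈ C_∞ there
    exists u ∈ U with Ax + Bu + Ew ∈ C_∞ for all w ∈ W. -/
theorem Cinf_robust_control_invariant {n m p : ℕ}
    (A : Matrix (Fin n) (Fin n) ℝ) (B : Matrix (Fin n) (Fin m) ℝ)
    (E : Matrix (Fin n) (Fin p) ℝ)
    (X : Set (Fin n → ℝ)) (U : Set (Fin m → ℝ)) (W : Set (Fin p → ℝ))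
    (hXc : IsCompact X) (hXcv : Convex ℝ X)
    (hUc : IsCompact U) (hUcv : Convex ℝ U) (hU0 : 0 ∈ interior U)
    (hWc : IsCompact W) (hWcv : Convex ℝ W)
    (C : ℕ → Set (Fin n → ℝ))
    (hC0 : C 0 = X)
    (hCs : ∀ i, C (i + 1)
      = {x ∈ X | ∃ u ∈ U, ∀ w ∈ W, A *ᵥ x + B *ᵥ u + E *ᵥ w ∈ C i})
    (hint : 0 ∈ interior (⋂ i, C i)) :
    ∀ x ∈ ⋂ i, C i, ∃ u ∈ U, ∀ w ∈ W, A *ᵥ x + B *ᵥ u + E *ᵥ w ∈ ⋂ i, C i := by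
  -- continuity facts
  have hcA : Continuous fun v : Fin n → ℝ => A *ᵥ v :=
    LinearMap.continuous_of_finiteDimensional (Matrix.mulVecLin A)
  have hcB : Continuous fun v : Fin m → ℝ => B *ᵥ v :=
    LinearMap.continuous_of_finiteDimensional (Matrix.mulVecLin B)
  -- C is compact for every i
  have hCcomp : ∀ i, IsCompact (C i) := by
    intro i
    induction i with
    | zero => rw [hC0]; exact hXc
    | succ i ih =>
      have heq : C (i + 1) = Prod.fst ''
          ((X ×ˢ U) ∩ ⋂ w ∈ W,
            (fun q : (Fin n → ℝ) × (Fin m → ℝ) =>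
              A *ᵥ q.1 + B *ᵥ q.2 + E *ᵥ w) ⁻¹' C i) := by
        rw [hCs]
        ext x
        simp only [Set.mem_setOf_eq, Set.mem_image, Set.mem_inter_iff,
          Set.mem_prod, Set.mem_iInter, Set.mem_preimage]
        constructor
        · rintro ⟨hxX, u, hu, h⟩
          exact ⟨(x, u), ⟨⟨hxX, hu⟩, fun w hw => h w hw⟩, rfl⟩
        · rintro ⟨⟨x', u⟩, ⟨⟨hxX, hu⟩, h⟩, rfl⟩
          exact ⟨hxX, u, hu, fun w hw => h w hw⟩
      rw [heq]
      refine IsCompact.image ?_ continuous_fst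
      refine (hXc.prod hUc).inter_right ?_
      refine isClosed_biInter fun w hw => ?_
      refine IsClosed.preimage ?_ ih.isClosed
      exact ((hcA.comp continuous_fst).add (hcB.comp continuous_snd)).add
        continuous_const
  -- C is decreasing
  have hdec : ∀ i, C (i + 1) ⊆ C i := by
    intro i
    induction i with
    | zero => rw [hCs, hC0]; exact fun x hx => hx.1
    | succ i ih =>
      rw [hCs (i + 1)]
      rintro x ⟨hxX, u, hu, h⟩
      rw [hCs i]
      exact ⟨hxX, u, hu, fun w hw => ih (h w hw)⟩
  -- main argument
  intro x hx
  set K : ℕ → Set (Fin m → ℝ) :=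
    fun i => {u ∈ U | ∀ w ∈ W, A *ᵥ x + B *ᵥ u + E *ᵥ w ∈ C i} with hK
  have hKsub : ∀ i, K (i + 1) ⊆ K i := by
    rintro i u ⟨hu, h⟩
    exact ⟨hu, fun w hw => hdec i (h w hw)⟩
  have hKne : ∀ i, (K i).Nonempty := by
    intro i
    have hxi : x ∈ C (i + 1) := Set.mem_iInter.mp hx (i + 1)
    rw [hCs i] at hxi
    obtain ⟨-, u, hu, h⟩ := hxi
    exact ⟨u, hu, h⟩
  have hKcl : ∀ i, IsClosed (K i) := by
    intro i
    have : K i = U ∩ ⋂ w ∈ W,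
        (fun u => A *ᵥ x + B *ᵥ u + E *ᵥ w) ⁻¹' C i := by
      ext u
      simp only [hK, Set.mem_setOf_eq, Set.mem_inter_iff, Set.mem_iInter,
        Set.mem_preimage]
    rw [this]
    refine hUc.isClosed.inter (isClosed_biInter fun w hw => ?_)
    refine IsClosed.preimage ?_ (hCcomp i).isClosed
    exact ((continuous_const.add hcB).add continuous_const)
  have hKcomp : ∀ i, IsCompact (K i) :=
    fun i => hUc.of_isClosed_subset (hKcl i) (fun u hu => hu.1)
  obtain ⟨u, hu⟩ :=
    IsCompact.nonempty_iInter_of_sequence_nonempty_isCompact_isClosed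
      K hKsub hKne (hKcomp 0) hKcl
  have hu0 : u ∈ K 0 := Set.mem_iInter.mp hu 0
  refine ⟨u, hu0.1, fun w hw => Set.mem_iInter.mpr fun i => ?_⟩
  exact (Set.mem_iInter.mp hu i).2 w hw
end
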